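/- Let e be a positive integer and let (x, y, z, w) be a solution in positive integers of (4^e−1)^x + 4^{e·y} + (4^e+1)^z = (4^e+2)^w. Then y is odd. -/

import Mathlib

theorem y_odd (e x y z w : ℕ) (he : 0 < e)
    (hx : 0 < x) (hy : 0 < y) (hz : 0 < z) (hw : 0 < w)
    (heq : (4 ^ e - 1) ^ x + 4 ^ (e * y) + (4 ^ e + 1) ^ z = (4 ^ e + 2) ^ w) :
    Odd y := by
  rw [← Nat.not_even_iff_odd]
  intro hyev
  set n : ℕ := 4 ^ e + 1 with hn
  have h4e : (1 : ℕ) ≤ 4 ^ e := Nat.one_le_pow _ _ (by norm_num)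
  -- cast the equation into ZMod n
  have hc : ((4 ^ e - 1 : ℕ) : ZMod n) ^ x + ((4:ZMod n) ^ e) ^ y
      + ((4 ^ e + 1 : ℕ) : ZMod n) ^ z = ((4 ^ e + 2 : ℕ) : ZMod n) ^ w := by
    have := congrArg (Nat.cast : ℕ → ZMod n) heq
    push_cast [pow_mul] at this
    push_cast
    convert this using 3
    exact_mod_cast (rfl : ((4 ^ e + 1 : ℕ) : ZMod n) = (n : ZMod n))
  have hself : ((n : ℕ) : ZMod n) = 0 := ZMod.natCast_self n
  have h4 : ((4 : ZMod n)) ^ e = -1 := by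
    have : ((4 ^ e + 1 : ℕ) : ZMod n) = 0 := by rw [← hn]; exact hself
    push_cast at this
    linear_combination this
  have hsub : ((4 ^ e - 1 : ℕ) : ZMod n) = -2 := by
    rw [Nat.cast_sub h4e]
    push_cast [h4]
    ring
  have hz0 : ((4 ^ e + 1 : ℕ) : ZMod n) = 0 := by rw [← hn]; exact hself
  have hw1 : ((4 ^ e + 2 : ℕ) : ZMod n) = 1 := by
    push_cast [h4]; ring
  rw [hsub, h4, hz0, hw1, hyev.neg_one_pow, one_pow,
    zero_pow hz.ne'] at hc
  -- now hc : (-2)^x + 1 + 0 = 1 in ZMod n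
  have h2 : ((2:ℕ)^x : ZMod n) = 0 := by
    have hx0 : ((-2 : ZMod n)) ^ x = 0 := by linear_combination hc
    have : ((-1 : ZMod n)) ^ x * (2 : ZMod n) ^ x = 0 := by
      rw [← neg_one_mul, mul_pow] at hx0; exact hx0
    have h1 := congrArg (fun t => ((-1 : ZMod n)) ^ x * t) this
    simp only [mul_zero, ← mul_assoc, ← mul_pow, neg_one_mul, neg_neg, one_pow, one_mul] at h1
    push_cast
    exact h1
  have h2' : ((2 ^ x : ℕ) : ZMod n) = 0 := by push_cast; exact h2
  have hdvd : n ∣ 2 ^ x := (ZMod.natCast_eq_zero_iff _ _).mp h2'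
  have hcop : Nat.Coprime n 2 := by
    rw [Nat.coprime_two_right, hn]
    exact (Nat.even_pow.mpr ⟨even_iff_two_dvd.mpr ⟨2, rfl⟩, he.ne'⟩).add_one
  have h1 : n = 1 := Nat.Coprime.eq_one_of_dvd (hcop.pow_right x) hdvd
  omega
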